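/- arXiv:2207.03967 — 2 statements merged into one kernel-verified Lean document; each statement's English description precedes it below -/
import Mathlib

section
/- Fix θ > 1/2 (θ ∈ ℕ suffices with θ ≥ 1). The uniformly local Sobolev space H^θ_{ul}(ℝ,ℝ) is an algebra: there exists a constant C (one may take C = 9) such that ‖uv‖_{H^θ_{ul}} ≤ C ‖u‖_{H^θ_{ul}} ‖v‖_{H^θ_{ul}} for all u, v ∈ H^θ_{ul}. -/
/-- The uniformly local `L²` norm
`‖u‖_{L²_ul} = sup_{y ∈ ℝ} (∫_{y-1/2}^{y+1/2} |u(x)|² dx)^{1/2}`. -/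
noncomputable def L2ulNorm (u : ℝ → ℝ) : ℝ :=
  ⨆ y : ℝ, Real.sqrt (∫ x in Set.Ioo (y - 1/2) (y + 1/2), (u x)^2)

/-- Membership in the uniformly local Sobolev space `H^θ_{ul}(ℝ,ℝ)`:
`u` is `θ`-times differentiable and all derivatives up to order `θ` lie in `L²_ul`. -/
def MemHul (θ : ℕ) (u : ℝ → ℝ) : Prop :=
  ContDiff ℝ (θ : ℕ∞) u ∧
  ∀ j ≤ θ, BddAbove (Set.range fun y : ℝ =>
    Real.sqrt (∫ x in Set.Ioo (y - 1/2) (y + 1/2), ((deriv^[j] u) x)^2))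

/-- The uniformly local Sobolev norm on `H^θ_{ul}`. -/
noncomputable def HulNorm (θ : ℕ) (u : ℝ → ℝ) : ℝ :=
  ∑ j ∈ Finset.range (θ + 1), L2ulNorm (deriv^[j] u)

open MeasureTheory Set

lemma contIoo {f : ℝ → ℝ} (hf : Continuous f) (a b : ℝ) :
    IntegrableOn f (Set.Ioo a b) :=
  (hf.integrableOn_Ioc).mono_set Set.Ioo_subset_Ioc_self

lemma contIter {θ : ℕ} {u : ℝ → ℝ} (h : ContDiff ℝ (θ : ℕ∞) u) {i : ℕ} (hi : i ≤ θ) :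
    Continuous (deriv^[i] u) := by
  have := h.continuous_iteratedDeriv i (by exact_mod_cast hi)
  rwa [iteratedDeriv_eq_iterate] at this

lemma contDiffOneIter {θ : ℕ} {u : ℝ → ℝ} (h : ContDiff ℝ (θ : ℕ∞) u) {i : ℕ}
    (hi : i + 1 ≤ θ) : ContDiff ℝ 1 (deriv^[i] u) := by
  have h2 : ContDiff ℝ ((1 + i : ℕ) : ℕ∞) u := h.of_le (by exact_mod_cast by omega)
  have := ContDiff.iterate_deriv' 1 i h2
  exact_mod_cast this

lemma sup_pointwise {f : ℝ → ℝ} (hf : ContDiff ℝ 1 f) (x : ℝ) :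
    |f x| ≤ 2 * (Real.sqrt (∫ t in Set.Ioo (x - 1/2) (x + 1/2), (f t)^2)
      + Real.sqrt (∫ t in Set.Ioo (x - 1/2) (x + 1/2), (deriv f t)^2)) := by
  set a := x - 1/2 with ha
  set b := x + 1/2 with hb
  have hab : a ≤ b := by rw [ha, hb]; linarith
  have hc : Continuous f := hf.continuous
  have hc' : Continuous (deriv f) := hf.continuous_deriv le_rfl
  set A2 := ∫ t in Set.Ioo a b, (f t)^2 with hA2
  set B2 := ∫ t in Set.Ioo a b, (deriv f t)^2 with hB2
  have hA2nn : 0 ≤ A2 := setIntegral_nonneg measurableSet_Ioo (fun t _ => sq_nonneg _)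
  have hB2nn : 0 ≤ B2 := setIntegral_nonneg measurableSet_Ioo (fun t _ => sq_nonneg _)
  obtain ⟨z, hz, hzmin⟩ := isCompact_Icc.exists_isMinOn (Set.nonempty_Icc.2 hab)
    ((hc.pow 2).continuousOn : ContinuousOn (fun t => (f t)^2) (Set.Icc a b))
  have hvol : (volume (Set.Ioo a b)).toReal = 1 := by
    rw [Real.volume_Ioo]; rw [ha, hb]; norm_num
  have claim1 : (f z)^2 ≤ A2 := by
    have h1 : ∫ _t in Set.Ioo a b, (f z)^2 ≤ A2 := by
      apply setIntegral_mono_on (integrableOn_const (by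
        rw [Real.volume_Ioo]; exact ENNReal.ofReal_ne_top))
        (contIoo (by fun_prop) a b) measurableSet_Ioo
      intro t ht
      exact hzmin (Set.Ioo_subset_Icc_self ht)
    rwa [setIntegral_const, measureReal_def, hvol, one_smul] at h1
  have hxmem : x ∈ Set.Icc a b := by constructor <;> [rw [ha]; rw [hb]] <;> linarith
  have hderiv : ∀ t ∈ Set.uIcc z x, HasDerivAt (fun s => (f s)^2)
      (2 * f t * deriv f t) t := by
    intro t _
    have h := ((hf.differentiable one_ne_zero) t).hasDerivAt
    have := h.pow 2
    simpa [pow_one, mul_comm, mul_assoc, mul_left_comm] using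
      (show HasDerivAt (fun s => (f s)^2) _ t from this)
  have hint : IntervalIntegrable (fun t => 2 * f t * deriv f t) volume z x :=
    (Continuous.intervalIntegrable (by fun_prop) z x)
  have hftc : ∫ t in z..x, 2 * f t * deriv f t = (f x)^2 - (f z)^2 :=
    intervalIntegral.integral_eq_sub_of_hasDerivAt hderiv hint
  have hsub : Set.uIoc z x ⊆ Set.Ioc a b :=
    Set.Ioc_subset_Ioc (le_min hz.1 hxmem.1) (max_le hz.2 hxmem.2)
  have hIocIoo : ∫ t in Set.Ioc a b, 2 * |f t| * |deriv f t|
      = ∫ t in Set.Ioo a b, 2 * |f t| * |deriv f t| := by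
    apply setIntegral_congr_set
    exact (MeasureTheory.Ioo_ae_eq_Ioc (α := ℝ)).symm
  have habs : |∫ t in z..x, 2 * f t * deriv f t|
      ≤ ∫ t in Set.Ioo a b, 2 * |f t| * |deriv f t| := by
    calc |∫ t in z..x, 2 * f t * deriv f t|
        ≤ ∫ t in Set.uIoc z x, 2 * |f t| * |deriv f t| := by
          simpa [Real.norm_eq_abs] using
            intervalIntegral.norm_integral_le_integral_norm_uIoc
              (f := fun t => 2 * f t * deriv f t) (a := z) (b := x) (μ := volume)
      _ ≤ ∫ t in Set.Ioc a b, 2 * |f t| * |deriv f t| := by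
          apply setIntegral_mono_set
          · exact Continuous.integrableOn_Ioc (by fun_prop)
          · exact Filter.Eventually.of_forall (fun t => by positivity)
          · exact HasSubset.Subset.eventuallyLE hsub
      _ = ∫ t in Set.Ioo a b, 2 * |f t| * |deriv f t| := hIocIoo
  have hptwise : ∫ t in Set.Ioo a b, 2 * |f t| * |deriv f t| ≤ A2 + B2 := by
    have h1 : ∫ t in Set.Ioo a b, 2 * |f t| * |deriv f t|
        ≤ ∫ t in Set.Ioo a b, ((f t)^2 + (deriv f t)^2) := by
      apply setIntegral_mono_on (Continuous.integrableOn_Ioc (by fun_prop) |>.mono_set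
        Set.Ioo_subset_Ioc_self) (contIoo (by fun_prop) a b) measurableSet_Ioo
      intro t _
      nlinarith [sq_nonneg (|f t| - |deriv f t|), sq_abs (f t), sq_abs (deriv f t)]
    rwa [integral_add (contIoo (by fun_prop) a b) (contIoo (by fun_prop) a b)] at h1
  have hkey : (f x)^2 ≤ 2 * A2 + B2 := by
    have h := le_abs_self (∫ t in z..x, 2 * f t * deriv f t)
    linarith
  have hA : Real.sqrt A2 ^ 2 = A2 := Real.sq_sqrt hA2nn
  have hB : Real.sqrt B2 ^ 2 = B2 := Real.sq_sqrt hB2nn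
  have hfinal : (f x)^2 ≤ (2 * (Real.sqrt A2 + Real.sqrt B2))^2 := by
    nlinarith [Real.sqrt_nonneg A2, Real.sqrt_nonneg B2]
  calc |f x| = Real.sqrt ((f x)^2) := (Real.sqrt_sq_eq_abs _).symm
    _ ≤ Real.sqrt ((2 * (Real.sqrt A2 + Real.sqrt B2))^2) := Real.sqrt_le_sqrt hfinal
    _ = |2 * (Real.sqrt A2 + Real.sqrt B2)| := Real.sqrt_sq_eq_abs _
    _ = 2 * (Real.sqrt A2 + Real.sqrt B2) := abs_of_nonneg (by positivity)

theorem stmt10 (θ : ℕ) (hθ : 1 ≤ θ) :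
    ∃ C : ℝ, 0 < C ∧ ∀ u v : ℝ → ℝ, MemHul θ u → MemHul θ v →
      MemHul θ (fun x => u x * v x) ∧
      HulNorm θ (fun x => u x * v x) ≤ C * HulNorm θ u * HulNorm θ v := by
  classical
  set K : ℝ := 4 * (θ + 1) * 2 ^ θ with hK
  have hKpos : (0:ℝ) < K := by positivity
  refine ⟨(θ + 1) * K, by positivity, ?_⟩
  intro u v hu hv
  set Mu := HulNorm θ u with hMu
  set Mv := HulNorm θ v with hMv
  have hL2nn : ∀ w : ℝ → ℝ, 0 ≤ L2ulNorm w :=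
    fun w => Real.iSup_nonneg (fun y => Real.sqrt_nonneg _)
  have hMu0 : 0 ≤ Mu := Finset.sum_nonneg (fun j _ => hL2nn _)
  have hMv0 : 0 ≤ Mv := Finset.sum_nonneg (fun j _ => hL2nn _)
  have hNu : ∀ j ≤ θ, ∀ y : ℝ,
      Real.sqrt (∫ x in Set.Ioo (y - 1/2) (y + 1/2), ((deriv^[j] u) x)^2) ≤ Mu := by
    intro j hj y
    calc Real.sqrt (∫ x in Set.Ioo (y - 1/2) (y + 1/2), ((deriv^[j] u) x)^2)
        ≤ L2ulNorm (deriv^[j] u) := le_ciSup (hu.2 j hj) y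
      _ ≤ ∑ k ∈ Finset.range (θ+1), L2ulNorm (deriv^[k] u) :=
          Finset.single_le_sum (f := fun k => L2ulNorm (deriv^[k] u)) (fun k _ => hL2nn _)
            (Finset.mem_range.2 (Nat.lt_succ_of_le hj))
      _ = Mu := by rw [hMu, HulNorm]
  have hNv : ∀ j ≤ θ, ∀ y : ℝ,
      Real.sqrt (∫ x in Set.Ioo (y - 1/2) (y + 1/2), ((deriv^[j] v) x)^2) ≤ Mv := by
    intro j hj y
    calc Real.sqrt (∫ x in Set.Ioo (y - 1/2) (y + 1/2), ((deriv^[j] v) x)^2)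
        ≤ L2ulNorm (deriv^[j] v) := le_ciSup (hv.2 j hj) y
      _ ≤ ∑ k ∈ Finset.range (θ+1), L2ulNorm (deriv^[k] v) :=
          Finset.single_le_sum (f := fun k => L2ulNorm (deriv^[k] v)) (fun k _ => hL2nn _)
            (Finset.mem_range.2 (Nat.lt_succ_of_le hj))
      _ = Mv := by rw [hMv, HulNorm]
  have hQu : ∀ j ≤ θ, ∀ y : ℝ,
      (∫ x in Set.Ioo (y - 1/2) (y + 1/2), ((deriv^[j] u) x)^2) ≤ Mu ^ 2 := by
    intro j hj y
    have hnn : 0 ≤ ∫ x in Set.Ioo (y - 1/2) (y + 1/2), ((deriv^[j] u) x)^2 :=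
      setIntegral_nonneg measurableSet_Ioo (fun t _ => sq_nonneg _)
    have h := hNu j hj y
    nlinarith [Real.sq_sqrt hnn, Real.sqrt_nonneg (∫ x in Set.Ioo (y - 1/2) (y + 1/2), ((deriv^[j] u) x)^2)]
  have hQv : ∀ j ≤ θ, ∀ y : ℝ,
      (∫ x in Set.Ioo (y - 1/2) (y + 1/2), ((deriv^[j] v) x)^2) ≤ Mv ^ 2 := by
    intro j hj y
    have hnn : 0 ≤ ∫ x in Set.Ioo (y - 1/2) (y + 1/2), ((deriv^[j] v) x)^2 :=
      setIntegral_nonneg measurableSet_Ioo (fun t _ => sq_nonneg _)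
    have h := hNv j hj y
    nlinarith [Real.sq_sqrt hnn, Real.sqrt_nonneg (∫ x in Set.Ioo (y - 1/2) (y + 1/2), ((deriv^[j] v) x)^2)]
  have hLinf_u : ∀ i, i + 1 ≤ θ → ∀ x : ℝ, |deriv^[i] u x| ≤ 4 * Mu := by
    intro i hi x
    have h1 : ContDiff ℝ 1 (deriv^[i] u) := contDiffOneIter hu.1 hi
    have h2 := sup_pointwise h1 x
    rw [show deriv (deriv^[i] u) = deriv^[i+1] u from
      (Function.iterate_succ_apply' deriv i u).symm] at h2
    have hs1 := hNu i (by omega) x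
    have hs2 := hNu (i+1) hi x
    linarith
  have hLinf_v : ∀ i, i + 1 ≤ θ → ∀ x : ℝ, |deriv^[i] v x| ≤ 4 * Mv := by
    intro i hi x
    have h1 : ContDiff ℝ 1 (deriv^[i] v) := contDiffOneIter hv.1 hi
    have h2 := sup_pointwise h1 x
    rw [show deriv (deriv^[i] v) = deriv^[i+1] v from
      (Function.iterate_succ_apply' deriv i v).symm] at h2
    have hs1 := hNv i (by omega) x
    have hs2 := hNv (i+1) hi x
    linarith
  have hcu : ∀ i, i ≤ θ → Continuous (deriv^[i] u) := fun i hi => contIter hu.1 hi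
  have hcv : ∀ i, i ≤ θ → Continuous (deriv^[i] v) := fun i hi => contIter hv.1 hi
  have huvC : ContDiff ℝ (θ : ℕ∞) (fun x => u x * v x) := hu.1.mul hv.1
  have hcuv : ∀ j, j ≤ θ → Continuous (deriv^[j] fun x => u x * v x) :=
    fun j hj => contIter huvC hj
  -- the key bound
  have key : ∀ j, j ≤ θ → ∀ y : ℝ,
      Real.sqrt (∫ x in Set.Ioo (y - 1/2) (y + 1/2),
        ((deriv^[j] fun x => u x * v x) x)^2) ≤ K * Mu * Mv := by
    intro j hj y
    set g : ℕ → ℝ → ℝ :=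
      fun i t => (j.choose i : ℝ) * |deriv^[i] u t| * |deriv^[j-i] v t| with hg
    have hgc : ∀ i ∈ Finset.range (j+1), Continuous (g i) := by
      intro i hi
      rw [Finset.mem_range] at hi
      exact (continuous_const.mul ((hcu i (by omega)).abs)).mul ((hcv (j-i) (by omega)).abs)
    have hpt : ∀ t : ℝ, |(deriv^[j] fun x => u x * v x) t|
        ≤ ∑ i ∈ Finset.range (j+1), g i t := by
      intro t
      have h := norm_iteratedFDeriv_mul_le hu.1 hv.1 t (n := j) (by exact_mod_cast hj)
      simpa [norm_iteratedFDeriv_eq_norm_iteratedDeriv, iteratedDeriv_eq_iterate,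
        Real.norm_eq_abs, hg] using h
    have hsq : ∀ t : ℝ, ((deriv^[j] fun x => u x * v x) t)^2
        ≤ ((j:ℝ)+1) * ∑ i ∈ Finset.range (j+1), (g i t)^2 := by
      intro t
      have h1 : ((deriv^[j] fun x => u x * v x) t)^2
          ≤ (∑ i ∈ Finset.range (j+1), g i t)^2 := by
        rw [← sq_abs]
        exact pow_le_pow_left₀ (abs_nonneg _) (hpt t) 2
      have h2 := sq_sum_le_card_mul_sum_sq (s := Finset.range (j+1)) (f := fun i => g i t)
      rw [Finset.card_range] at h2
      push_cast at h2
      linarith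
    have hterm : ∀ i ∈ Finset.range (j+1),
        (∫ t in Set.Ioo (y - 1/2) (y + 1/2), (g i t)^2)
          ≤ (j.choose i : ℝ)^2 * (16 * (Mu^2 * Mv^2)) := by
      intro i hi
      rw [Finset.mem_range, Nat.lt_succ_iff] at hi
      rcases eq_or_lt_of_le hi with hij | hij
      · -- i = j : use L∞ bound on v
        have hji : j - i = 0 := by omega
        have hbd : ∀ t : ℝ, (g i t)^2
            ≤ ((j.choose i : ℝ)^2 * (16 * Mv^2)) * ((deriv^[i] u) t)^2 := by
          intro t
          have h1 := hLinf_v 0 (by omega) t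
          have h2 : ((deriv^[0] v) t)^2 ≤ (4*Mv)^2 := by
            rw [← sq_abs]; exact pow_le_pow_left₀ (abs_nonneg _) h1 2
          calc (g i t)^2
              = ((j.choose i : ℝ)^2 * ((deriv^[i] u) t)^2) * ((deriv^[0] v) t)^2 := by
                simp only [hg, hji, mul_pow, sq_abs]; try ring
            _ ≤ ((j.choose i : ℝ)^2 * ((deriv^[i] u) t)^2) * ((4*Mv)^2) :=
                mul_le_mul_of_nonneg_left h2 (by positivity)
            _ = ((j.choose i : ℝ)^2 * (16 * Mv^2)) * ((deriv^[i] u) t)^2 := by ring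
        calc (∫ t in Set.Ioo (y - 1/2) (y + 1/2), (g i t)^2)
            ≤ ∫ t in Set.Ioo (y - 1/2) (y + 1/2),
              ((j.choose i : ℝ)^2 * (16 * Mv^2)) * ((deriv^[i] u) t)^2 := by
              apply setIntegral_mono_on
                (contIoo ((hgc i (Finset.mem_range.2 (by omega))).pow 2) _ _)
                (contIoo (continuous_const.mul ((hcu i (by omega)).pow 2)) _ _)
                measurableSet_Ioo (fun t _ => hbd t)
          _ = ((j.choose i : ℝ)^2 * (16 * Mv^2)) *
              ∫ t in Set.Ioo (y - 1/2) (y + 1/2), ((deriv^[i] u) t)^2 :=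
              integral_const_mul _ _
          _ ≤ ((j.choose i : ℝ)^2 * (16 * Mv^2)) * Mu^2 :=
              mul_le_mul_of_nonneg_left (hQu i (by omega) y) (by positivity)
          _ = (j.choose i : ℝ)^2 * (16 * (Mu^2 * Mv^2)) := by ring
      · -- i < j : use L∞ bound on u
        have hbd : ∀ t : ℝ, (g i t)^2
            ≤ ((j.choose i : ℝ)^2 * (16 * Mu^2)) * ((deriv^[j-i] v) t)^2 := by
          intro t
          have h1 := hLinf_u i (by omega) t
          have h2 : ((deriv^[i] u) t)^2 ≤ (4*Mu)^2 := by
            rw [← sq_abs]; exact pow_le_pow_left₀ (abs_nonneg _) h1 2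
          calc (g i t)^2
              = ((j.choose i : ℝ)^2 * ((deriv^[j-i] v) t)^2) * ((deriv^[i] u) t)^2 := by
                simp only [hg, mul_pow, sq_abs]; try ring
            _ ≤ ((j.choose i : ℝ)^2 * ((deriv^[j-i] v) t)^2) * ((4*Mu)^2) :=
                mul_le_mul_of_nonneg_left h2 (by positivity)
            _ = ((j.choose i : ℝ)^2 * (16 * Mu^2)) * ((deriv^[j-i] v) t)^2 := by ring
        calc (∫ t in Set.Ioo (y - 1/2) (y + 1/2), (g i t)^2)
            ≤ ∫ t in Set.Ioo (y - 1/2) (y + 1/2),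
              ((j.choose i : ℝ)^2 * (16 * Mu^2)) * ((deriv^[j-i] v) t)^2 := by
              apply setIntegral_mono_on
                (contIoo ((hgc i (Finset.mem_range.2 (by omega))).pow 2) _ _)
                (contIoo (continuous_const.mul ((hcv (j-i) (by omega)).pow 2)) _ _)
                measurableSet_Ioo (fun t _ => hbd t)
          _ = ((j.choose i : ℝ)^2 * (16 * Mu^2)) *
              ∫ t in Set.Ioo (y - 1/2) (y + 1/2), ((deriv^[j-i] v) t)^2 :=
              integral_const_mul _ _
          _ ≤ ((j.choose i : ℝ)^2 * (16 * Mu^2)) * Mv^2 :=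
              mul_le_mul_of_nonneg_left (hQv (j-i) (by omega) y) (by positivity)
          _ = (j.choose i : ℝ)^2 * (16 * (Mu^2 * Mv^2)) := by ring
    have hchoose : ∀ i ∈ Finset.range (j+1), (j.choose i : ℝ)^2 ≤ ((2:ℝ)^θ)^2 := by
      intro i hi
      have h1 : j.choose i ≤ 2 ^ j := by
        calc j.choose i ≤ ∑ k ∈ Finset.range (j+1), j.choose k :=
            Finset.single_le_sum (fun k _ => Nat.zero_le _) hi
          _ = 2 ^ j := Nat.sum_range_choose j
      have h2 : (2:ℕ) ^ j ≤ 2 ^ θ := Nat.pow_le_pow_right (by norm_num) hj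
      have h3 : (j.choose i : ℝ) ≤ (2:ℝ)^θ := by exact_mod_cast h1.trans h2
      exact pow_le_pow_left₀ (by positivity) h3 2
    have hS : (∫ x in Set.Ioo (y - 1/2) (y + 1/2),
        ((deriv^[j] fun x => u x * v x) x)^2) ≤ (K * Mu * Mv)^2 := by
      have hint1 : IntegrableOn (fun t => ((deriv^[j] fun x => u x * v x) t)^2)
          (Set.Ioo (y - 1/2) (y + 1/2)) := contIoo ((hcuv j hj).pow 2) _ _
      have hint2 : IntegrableOn
          (fun t => ((j:ℝ)+1) * ∑ i ∈ Finset.range (j+1), (g i t)^2)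
          (Set.Ioo (y - 1/2) (y + 1/2)) := by
        apply contIoo
        exact continuous_const.mul (continuous_finset_sum _ (fun i hi => (hgc i hi).pow 2))
      calc (∫ x in Set.Ioo (y - 1/2) (y + 1/2), ((deriv^[j] fun x => u x * v x) x)^2)
          ≤ ∫ t in Set.Ioo (y - 1/2) (y + 1/2),
            ((j:ℝ)+1) * ∑ i ∈ Finset.range (j+1), (g i t)^2 :=
            setIntegral_mono_on hint1 hint2 measurableSet_Ioo (fun t _ => hsq t)
        _ = ((j:ℝ)+1) * ∑ i ∈ Finset.range (j+1),
            ∫ t in Set.Ioo (y - 1/2) (y + 1/2), (g i t)^2 := by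
            rw [integral_const_mul, integral_finset_sum _ (f := fun i t => (g i t)^2)
              (fun i hi => contIoo (f := fun t => (g i t)^2) ((hgc i hi).pow 2) _ _)]
        _ ≤ ((j:ℝ)+1) * ∑ i ∈ Finset.range (j+1),
            ((2:ℝ)^θ)^2 * (16 * (Mu^2 * Mv^2)) := by
            apply mul_le_mul_of_nonneg_left _ (by positivity)
            apply Finset.sum_le_sum
            intro i hi
            calc (∫ t in Set.Ioo (y - 1/2) (y + 1/2), (g i t)^2)
                ≤ (j.choose i : ℝ)^2 * (16 * (Mu^2 * Mv^2)) := hterm i hi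
              _ ≤ ((2:ℝ)^θ)^2 * (16 * (Mu^2 * Mv^2)) := by
                  apply mul_le_mul_of_nonneg_right (hchoose i hi) (by positivity)
        _ = ((j:ℝ)+1) * (((j:ℝ)+1) * (((2:ℝ)^θ)^2 * (16 * (Mu^2 * Mv^2)))) := by
            rw [Finset.sum_const, Finset.card_range]
            push_cast
            ring
        _ ≤ ((θ:ℝ)+1) * (((θ:ℝ)+1) * (((2:ℝ)^θ)^2 * (16 * (Mu^2 * Mv^2)))) := by
            have hj1 : (j:ℝ) + 1 ≤ (θ:ℝ) + 1 := by exact_mod_cast Nat.succ_le_succ hj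
            gcongr
        _ = (K * Mu * Mv)^2 := by rw [hK]; push_cast; ring
    calc Real.sqrt (∫ x in Set.Ioo (y - 1/2) (y + 1/2),
          ((deriv^[j] fun x => u x * v x) x)^2)
        ≤ Real.sqrt ((K * Mu * Mv)^2) := Real.sqrt_le_sqrt hS
      _ = K * Mu * Mv := by
          rw [Real.sqrt_sq (by positivity)]
  constructor
  · refine ⟨huvC, ?_⟩
    intro j hj
    exact ⟨K * Mu * Mv, by rintro _ ⟨y, rfl⟩; exact key j hj y⟩
  · rw [HulNorm]
    calc ∑ j ∈ Finset.range (θ+1), L2ulNorm (deriv^[j] fun x => u x * v x)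
        ≤ ∑ _j ∈ Finset.range (θ+1), K * Mu * Mv := by
          apply Finset.sum_le_sum
          intro j hj
          rw [Finset.mem_range, Nat.lt_succ_iff] at hj
          exact ciSup_le (fun y => key j hj y)
      _ = ((θ:ℝ)+1) * (K * Mu * Mv) := by
          rw [Finset.sum_const, Finset.card_range]
          push_cast
          ring
      _ = (θ+1) * K * Mu * Mv := by push_cast; ring
end

section
/- Let u ∈ H^{θ+1}_{ul}(ℝ,ℝ) and r ≥ 0. Then the rescaled function x ↦ u(rx) lies in H^θ_{ul}(ℝ,ℝ) with ‖x ↦ u(rx)‖_{L²_{ul}} ≤ ‖u‖_{C⁰_b} ≤ C ‖u‖_{H¹_{ul}} for a universal constant C. -/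
open MeasureTheory Set

lemma cIoo {f : ℝ → ℝ} (hf : Continuous f) (a b : ℝ) :
    MeasureTheory.IntegrableOn f (Set.Ioo a b) :=
  (hf.integrableOn_Icc).mono_set Set.Ioo_subset_Icc_self

lemma vol_Ioo (y : ℝ) : (MeasureTheory.volume (Set.Ioo (y - 1/2) (y + 1/2))).toReal = 1 := by
  rw [Real.volume_Ioo]
  norm_num

lemma local_sqrt_le {f : ℝ → ℝ} (hf : Continuous f) {K : ℝ} (hK : 0 ≤ K)
    (hb : ∀ x, |f x| ≤ K) (y : ℝ) :
    Real.sqrt (∫ x in Set.Ioo (y - 1/2) (y + 1/2), (f x)^2) ≤ K := by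
  have hint : IntegrableOn (fun x => (f x)^2) (Set.Ioo (y - 1/2) (y + 1/2)) :=
    cIoo (hf.pow 2) _ _
  have h1 : (∫ x in Set.Ioo (y - 1/2) (y + 1/2), (f x)^2) ≤ K^2 := by
    have h2 : (∫ x in Set.Ioo (y - 1/2) (y + 1/2), (f x)^2)
        ≤ ∫ _x in Set.Ioo (y - 1/2) (y + 1/2), K^2 := by
      apply setIntegral_mono_on hint (integrableOn_const measure_Ioo_lt_top.ne enorm_ne_top)
        measurableSet_Ioo
      intro x _
      have := hb x
      nlinarith [abs_nonneg (f x), sq_abs (f x)]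
    rwa [setIntegral_const, measureReal_def, vol_Ioo y, smul_eq_mul, one_mul] at h2
  calc Real.sqrt (∫ x in Set.Ioo (y - 1/2) (y + 1/2), (f x)^2)
      ≤ Real.sqrt (K^2) := Real.sqrt_le_sqrt h1
    _ = K := by rw [Real.sqrt_sq hK]

/-- Sobolev embedding bound: `|u x| ≤ 2 (A + B)`. -/
lemma sup_bound {u : ℝ → ℝ} (hu : ContDiff ℝ 1 u) {A B : ℝ}
    (hA : ∀ y, Real.sqrt (∫ x in Set.Ioo (y - 1/2) (y + 1/2), (u x)^2) ≤ A)
    (hB : ∀ y, Real.sqrt (∫ x in Set.Ioo (y - 1/2) (y + 1/2), (deriv u x)^2) ≤ B)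
    (x : ℝ) : |u x| ≤ 2 * (A + B) := by
  have hcu : Continuous u := hu.continuous
  have hcd : Continuous (deriv u) := hu.continuous_deriv le_rfl
  have hA0 : 0 ≤ A := le_trans (Real.sqrt_nonneg _) (hA 0)
  have hB0 : 0 ≤ B := le_trans (Real.sqrt_nonneg _) (hB 0)
  set I := Set.Ioo (x - 1/2) (x + 1/2) with hI
  have hintu : IntegrableOn (fun t => (u t)^2) I := cIoo (hcu.pow 2) _ _
  have hintd : IntegrableOn (fun t => (deriv u t)^2) I := cIoo (hcd.pow 2) _ _
  have hIu : (∫ t in I, (u t)^2) ≤ A^2 := by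
    have h := hA x
    have hnn : 0 ≤ ∫ t in I, (u t)^2 :=
      setIntegral_nonneg measurableSet_Ioo (fun t _ => sq_nonneg _)
    nlinarith [Real.sq_sqrt hnn, Real.sqrt_nonneg (∫ t in I, (u t)^2)]
  have hId : (∫ t in I, (deriv u t)^2) ≤ B^2 := by
    have h := hB x
    have hnn : 0 ≤ ∫ t in I, (deriv u t)^2 :=
      setIntegral_nonneg measurableSet_Ioo (fun t _ => sq_nonneg _)
    nlinarith [Real.sq_sqrt hnn, Real.sqrt_nonneg (∫ t in I, (deriv u t)^2)]
  have hxI : x ∈ I := by constructor <;> simp [hI]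
  -- main pointwise estimate over y ∈ I
  have key : ∀ y ∈ I, (u x)^2 ≤ (u y)^2 + (A^2 + B^2) := by
    intro y hy
    have hder : ∀ t ∈ Set.uIcc y x, HasDerivAt (fun s => (u s)^2)
        (2 * u t * deriv u t) t := by
      intro t _
      have h1 : HasDerivAt u (deriv u t) t :=
        ((hu.differentiable one_ne_zero) t).hasDerivAt
      have := h1.pow 2
      convert this using 1
      · rfl
      · rfl
      · rfl
      · norm_num
    have hcont : IntervalIntegrable (fun t => 2 * u t * deriv u t) volume y x :=
      (((continuous_const.mul hcu).mul hcd)).intervalIntegrable _ _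
    have hftc : (∫ t in y..x, 2 * u t * deriv u t) = (u x)^2 - (u y)^2 :=
      intervalIntegral.integral_eq_sub_of_hasDerivAt hder hcont
    have hsub : Set.uIoc y x ⊆ I := by
      have h5 : Set.uIcc y x ⊆ I := Set.ordConnected_Ioo.uIcc_subset hy hxI
      exact fun t ht => h5 (Set.Ioc_subset_Icc_self ht)
    have habs : |∫ t in y..x, 2 * u t * deriv u t| ≤
        ∫ t in I, |2 * u t * deriv u t| := by
      have h6 : ‖∫ t in y..x, 2 * u t * deriv u t‖ ≤
          ∫ t in Set.uIoc y x, ‖2 * u t * deriv u t‖ :=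
        intervalIntegral.norm_integral_le_integral_norm_uIoc
      simp only [Real.norm_eq_abs] at h6
      refine le_trans h6 ?_
      apply setIntegral_mono_set
      · exact cIoo (((continuous_const.mul hcu).mul hcd).abs) _ _
      · exact Filter.Eventually.of_forall fun t => abs_nonneg _
      · exact HasSubset.Subset.eventuallyLE hsub
    have hptw : (∫ t in I, |2 * u t * deriv u t|) ≤ A^2 + B^2 := by
      have h1 : (∫ t in I, |2 * u t * deriv u t|) ≤
          ∫ t in I, ((u t)^2 + (deriv u t)^2) := by
        apply setIntegral_mono_on
          (cIoo (((continuous_const.mul hcu).mul hcd).abs) _ _)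
          (hintu.add hintd) measurableSet_Ioo
        intro t _
        have := abs_mul_abs_self (u t - deriv u t)
        have := abs_mul_abs_self (u t + deriv u t)
        simp only [Pi.mul_apply]
        rw [abs_mul, abs_mul]
        simp only [abs_two, Pi.add_apply]
        nlinarith [sq_abs (u t), sq_abs (deriv u t), abs_nonneg (u t),
          abs_nonneg (deriv u t), sq_nonneg (|u t| - |deriv u t|)]
      rw [integral_add hintu hintd] at h1
      linarith
    have := abs_le.mp (le_trans habs hptw)
    nlinarith [hftc, this.1, this.2]
  -- average the estimate
  have hgec : ((u x)^2 - (A^2 + B^2)) * (volume I).toReal ≤ ∫ t in I, (u t)^2 := by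
    apply setIntegral_ge_of_const_le_real measurableSet_Ioo (by simp)
    · intro y hy
      linarith [key y hy]
    · exact hintu
  rw [hI, vol_Ioo x, mul_one] at hgec
  have hsq : (u x)^2 ≤ (2 * (A + B))^2 := by nlinarith
  nlinarith [abs_nonneg (u x), sq_abs (u x)]

lemma deriv_rescale {θ : ℕ} {u : ℝ → ℝ} (hu : ContDiff ℝ ((θ+1 : ℕ) : ℕ∞) u) (r : ℝ) :
    ∀ j ≤ θ, deriv^[j] (fun x => u (r * x)) = fun x => r ^ j * deriv^[j] u (r * x) := by
  intro j
  induction j with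
  | zero => intro _; simp
  | succ j ih =>
    intro hj
    have hj' : j ≤ θ := Nat.le_of_succ_le hj
    have hdj : ContDiff ℝ 1 (deriv^[j] u) := by
      have : ContDiff ℝ ((1 + j : ℕ) : ℕ∞) u := by
        apply hu.of_le
        exact_mod_cast (by omega : 1 + j ≤ θ + 1)
      exact_mod_cast ContDiff.iterate_deriv' 1 j (by exact_mod_cast this)
    rw [Function.iterate_succ_apply', ih hj']
    funext x
    have h1 : HasDerivAt (deriv^[j] u) (deriv (deriv^[j] u) (r * x)) (r * x) :=
      ((hdj.differentiable one_ne_zero) (r * x)).hasDerivAt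
    have h2 : HasDerivAt (fun x : ℝ => r * x) r x := by
      simpa using (hasDerivAt_id x).const_mul r
    have h3 : HasDerivAt (fun x => deriv^[j] u (r * x))
        (deriv (deriv^[j] u) (r * x) * r) x := HasDerivAt.comp x h1 h2
    have h4 := (h3.const_mul (r ^ j)).deriv
    rw [h4, ← Function.iterate_succ_apply' deriv j u]
    ring

theorem stmt11 :
    ∃ C : ℝ, 0 < C ∧ ∀ (θ : ℕ) (u : ℝ → ℝ) (r : ℝ),
      MemHul (θ + 1) u → 0 ≤ r →
        MemHul θ (fun x => u (r * x)) ∧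
        L2ulNorm (fun x => u (r * x)) ≤ (⨆ x : ℝ, |u x|) ∧
        (⨆ x : ℝ, |u x|) ≤ C * HulNorm 1 u := by
  refine ⟨2, by norm_num, ?_⟩
  intro θ u r hu hr
  obtain ⟨hsm, hbdd⟩ := hu
  have hCj : ∀ j ≤ θ, ContDiff ℝ 1 (deriv^[j] u) := by
    intro j hj
    have h : ContDiff ℝ ((1 + j : ℕ) : ℕ∞) u := by
      apply hsm.of_le
      exact_mod_cast (by omega : 1 + j ≤ θ + 1)
    exact_mod_cast ContDiff.iterate_deriv' 1 j (by exact_mod_cast h)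
  have hle : ∀ j ≤ θ + 1, ∀ y : ℝ,
      Real.sqrt (∫ x in Set.Ioo (y - 1/2) (y + 1/2), ((deriv^[j] u) x)^2)
        ≤ L2ulNorm (deriv^[j] u) := by
    intro j hj y
    exact le_ciSup (hbdd j hj) y
  have supj : ∀ j ≤ θ, ∀ x : ℝ, |deriv^[j] u x| ≤
      2 * (L2ulNorm (deriv^[j] u) + L2ulNorm (deriv^[j+1] u)) := by
    intro j hj x
    apply sup_bound (hCj j hj) (hle j (by omega))
    intro y
    have h7 := hle (j+1) (by omega) y
    rwa [← Function.iterate_succ_apply' deriv j u]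
  set M : ℕ → ℝ := fun j => 2 * (L2ulNorm (deriv^[j] u) + L2ulNorm (deriv^[j+1] u))
    with hM
  have hM0 : ∀ j ≤ θ, 0 ≤ M j := fun j hj =>
    le_trans (abs_nonneg (deriv^[j] u 0)) (supj j hj 0)
  have hvsm : ContDiff ℝ (θ : ℕ∞) (fun x => u (r * x)) := by
    have h1 : ContDiff ℝ (θ : ℕ∞) u := by
      apply hsm.of_le
      exact_mod_cast (by omega : θ ≤ θ + 1)
    exact h1.comp (contDiff_const.mul contDiff_id)
  have hmem : MemHul θ (fun x => u (r * x)) := by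
    refine ⟨hvsm, ?_⟩
    intro j hj
    rw [deriv_rescale hsm r j hj]
    refine ⟨r ^ j * M j, ?_⟩
    rintro z ⟨y, rfl⟩
    apply local_sqrt_le
    · exact continuous_const.mul
        (((hCj j hj).continuous).comp (continuous_const.mul continuous_id))
    · exact mul_nonneg (pow_nonneg hr j) (hM0 j hj)
    · intro x
      rw [abs_mul, abs_pow, abs_of_nonneg hr]
      exact mul_le_mul_of_nonneg_left (supj j hj (r * x)) (pow_nonneg hr j)
  have hub : ∀ x : ℝ, |u x| ≤ M 0 := by
    intro x
    have := supj 0 (Nat.zero_le θ) x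
    simpa [hM] using this
  have hSbdd : BddAbove (Set.range fun x : ℝ => |u x|) := ⟨M 0, by
    rintro z ⟨x, rfl⟩; exact hub x⟩
  have hS : ∀ x : ℝ, |u x| ≤ ⨆ x : ℝ, |u x| := fun x => le_ciSup hSbdd x
  have hS0 : 0 ≤ ⨆ x : ℝ, |u x| := le_trans (abs_nonneg (u 0)) (hS 0)
  refine ⟨hmem, ?_, ?_⟩
  · apply ciSup_le
    intro y
    apply local_sqrt_le
    · exact hsm.continuous.comp (continuous_const.mul continuous_id)
    · exact hS0
    · exact fun x => hS (r * x)
  · have hH : HulNorm 1 u = L2ulNorm (deriv^[0] u) + L2ulNorm (deriv^[1] u) := by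
      simp [HulNorm, Finset.sum_range_succ]
    apply ciSup_le
    intro x
    rw [hH]
    exact hub x
end
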